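/- There exists a number 0 < ā < 1 such that for every a with ā < a < 1 the following weak-unidentifiability bounds hold: (i) for all n, n* > 2, |f(n) − f(n*)| < f_∞ − f₂; and (ii) for every n* > 2 and every n > n*, |f(n) − f(n*)| < f_∞ − f(n*); in particular, with ε = f_∞ − f(n*), the set {n > 2 : |f(n) − f(n*)| < ε} contains the half-line (n*, ∞) and hence has infinite Lebesgue measure. -/

import Mathlib

open MeasureTheory

/-- The reduced identifiability function of the pairwise SIR model:
`f a n = ((a^(1/n) − a^(2/n))/(a^(2/n) − a))·(n−2)`. -/
noncomputable def pwF (a n : ℝ) : ℝ :=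
  ((a ^ ((1 : ℝ)/n) - a ^ ((2 : ℝ)/n)) / (a ^ ((2 : ℝ)/n) - a)) * (n - 2)

/-- `f₂ = 2(a − √a)/(a·ln a)`. -/
noncomputable def pwFTwo (a : ℝ) : ℝ := 2 * (a - Real.sqrt a) / (a * Real.log a)

/-- `f_∞ = (ln a)/(a − 1)`. -/
noncomputable def pwFInf (a : ℝ) : ℝ := Real.log a / (a - 1)

/-! ### Auxiliary: the function `Φ(x) = (eˣ − 1)/x` with `Φ(0) = 1`. -/

noncomputable def pwPhi (x : ℝ) : ℝ := if x = 0 then 1 else (Real.exp x - 1) / x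

lemma pwPhi_pos (x : ℝ) : 0 < pwPhi x := by
  unfold pwPhi
  rcases lt_trichotomy x 0 with h | h | h
  · rw [if_neg h.ne]
    apply div_pos_of_neg_of_neg _ h
    have := Real.exp_lt_one_iff.mpr h
    linarith
  · simp [h]
  · rw [if_neg h.ne']
    apply div_pos _ h
    have : (1:ℝ) < Real.exp x := by simpa using Real.exp_lt_exp.mpr h
    linarith

lemma pwPhi_of_ne (x : ℝ) (hx : x ≠ 0) : pwPhi x = (Real.exp x - 1) / x := if_neg hx

lemma pwPhi_cont : Continuous pwPhi := by
  rw [continuous_iff_continuousAt]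
  intro x
  rcases eq_or_ne x 0 with rfl | hx
  · have h : Filter.Tendsto (fun y => (Real.exp y - 1) / y) (nhdsWithin 0 {0}ᶜ) (nhds 1) := by
      have := Real.hasDerivAt_exp 0
      rw [hasDerivAt_iff_tendsto_slope] at this
      simp only [Real.exp_zero] at this
      refine this.congr (fun y => ?_)
      simp [slope_def_field]
    have h2 : Filter.Tendsto pwPhi (nhdsWithin 0 {0}ᶜ) (nhds 1) := by
      refine h.congr' ?_
      filter_upwards [self_mem_nhdsWithin] with y hy
      exact (pwPhi_of_ne y hy).symm
    unfold ContinuousAt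
    rw [show pwPhi 0 = 1 from if_pos rfl]
    rw [← nhdsNE_sup_pure 0]
    rw [Filter.tendsto_sup]
    refine ⟨h2, ?_⟩
    rw [Filter.tendsto_pure_left]
    intro s hs
    have : pwPhi 0 = 1 := if_pos rfl
    exact this ▸ mem_of_mem_nhds hs
  · have : ContinuousAt (fun y => (Real.exp y - 1) / y) x :=
      ContinuousAt.div (by fun_prop) continuousAt_id hx
    refine this.congr ?_
    filter_upwards [isOpen_compl_singleton.mem_nhds hx] with y hy
    exact (pwPhi_of_ne y hy).symm

lemma pwPhi_hasDeriv (x : ℝ) (hx : x ≠ 0) :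
    HasDerivAt pwPhi ((x * Real.exp x - (Real.exp x - 1)) / x^2) x := by
  have h : HasDerivAt (fun y => (Real.exp y - 1) / y)
      ((Real.exp x * x - (Real.exp x - 1) * 1) / x^2) x :=
    HasDerivAt.div ((Real.hasDerivAt_exp x).sub_const 1) (hasDerivAt_id x) hx
  have h2 : HasDerivAt pwPhi ((Real.exp x * x - (Real.exp x - 1) * 1) / x^2) x := by
    refine h.congr_of_eventuallyEq ?_
    filter_upwards [isOpen_compl_singleton.mem_nhds hx] with y hy
    exact pwPhi_of_ne y hy
  convert h2 using 1; ring

/-! ### Elementary `exp` inequalities -/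

lemma pwExpTaylor (x : ℝ) (hx : |x| ≤ 1) :
    |Real.exp x - (1 + x + x^2/2)| ≤ |x|^3 * (2/9) := by
  have h := Real.exp_bound hx (n := 3) (by norm_num)
  simp [Finset.sum_range_succ, Nat.factorial] at h
  convert h using 2
  norm_num

lemma pwP1 (u : ℝ) (h0 : 0 < u) (h1 : u ≤ 1/8) :
    u * Real.exp u - (Real.exp u - 1) ≤ 3/5 * (u * (Real.exp u - 1)) := by
  have hb := pwExpTaylor u (by rw [abs_of_pos h0]; linarith)
  rw [abs_of_pos h0] at hb
  have hb' := abs_le.mp hb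
  nlinarith [sq_nonneg u, pow_pos h0 3]

lemma pwP2 (y : ℝ) (h0 : y < 0) (h1 : -(1/8) ≤ y) :
    2/5 * (y * (Real.exp y - 1)) ≤ y * Real.exp y - (Real.exp y - 1) := by
  have hb := pwExpTaylor y (by rw [abs_of_neg h0]; linarith)
  rw [abs_of_neg h0] at hb
  have hb' := abs_le.mp hb
  nlinarith [sq_nonneg y, sq_nonneg (y+1)]

/-! ### Strict antitonicity of `u ↦ Φ(u)/Φ(2u − s)` on `[0, s/2]` for `0 < s ≤ 1/8` -/

lemma pwG_anti (s : ℝ) (hs0 : 0 < s) (hs8 : s ≤ 1/8) :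
    StrictAntiOn (fun u => pwPhi u / pwPhi (2*u - s)) (Set.Icc 0 (s/2)) := by
  apply strictAntiOn_of_deriv_neg (convex_Icc _ _)
  · exact (pwPhi_cont.div (pwPhi_cont.comp (by continuity))
      (fun u => (pwPhi_pos _).ne')).continuousOn
  · intro x hx
    rw [interior_Icc] at hx
    obtain ⟨hx0, hxs⟩ := hx
    set y := 2*x - s with hy
    have hy0 : y < 0 := by simp only [hy]; linarith
    have hy8 : -(1/8) ≤ y := by simp only [hy]; linarith
    have hxne : x ≠ 0 := hx0.ne'
    have hyne : y ≠ 0 := hy0.ne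
    have hinner : HasDerivAt (fun u : ℝ => 2*u - s) 2 x := by
      simpa using ((hasDerivAt_id x).const_mul 2).sub_const s
    have hcomp : HasDerivAt (fun u : ℝ => pwPhi (2*u - s))
        ((y * Real.exp y - (Real.exp y - 1)) / y^2 * 2) x :=
      HasDerivAt.comp (h₂ := pwPhi) x (pwPhi_hasDeriv y hyne) hinner
    have hderiv : HasDerivAt (fun u => pwPhi u / pwPhi (2*u - s))
        (((x * Real.exp x - (Real.exp x - 1)) / x^2 * pwPhi y -
          pwPhi x * ((y * Real.exp y - (Real.exp y - 1)) / y^2 * 2)) / (pwPhi y)^2) x :=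
      (pwPhi_hasDeriv x hxne).div hcomp (pwPhi_pos y).ne'
    rw [hderiv.deriv]
    apply div_neg_of_neg_of_pos _ (pow_pos (pwPhi_pos y) 2)
    have h1 : (x * Real.exp x - (Real.exp x - 1)) / x^2 ≤ 3/5 * pwPhi x := by
      rw [pwPhi_of_ne x hxne,
        show 3/5 * ((Real.exp x - 1)/x) = (3/5 * (x * (Real.exp x - 1))) / x^2 by
          field_simp]
      exact (div_le_div_iff_of_pos_right (by positivity)).mpr (pwP1 x hx0 (by linarith))
    have h2 : 2/5 * pwPhi y ≤ (y * Real.exp y - (Real.exp y - 1)) / y^2 := by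
      rw [pwPhi_of_ne y hyne,
        show 2/5 * ((Real.exp y - 1)/y) = (2/5 * (y * (Real.exp y - 1))) / y^2 by
          field_simp]
      exact (div_le_div_iff_of_pos_right (by positivity)).mpr (pwP2 y hy0 hy8)
    nlinarith [pwPhi_pos x, pwPhi_pos y, mul_pos (pwPhi_pos x) (pwPhi_pos y)]

/-! ### Substitution identities -/

lemma pwF_eq (a n : ℝ) (ha0 : 0 < a) (ha1 : a < 1) (hn : 2 < n) :
    pwF a n = pwPhi (-Real.log a / n) / pwPhi (2 * (-Real.log a / n) - -Real.log a) := by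
  have hloga : Real.log a < 0 := Real.log_neg ha0 ha1
  have hn0 : (0:ℝ) < n := by linarith
  set t := Real.log a / n with ht
  have ht0 : t < 0 := div_neg_of_neg_of_pos hloga hn0
  have hnt : Real.log a = n * t := by rw [ht]; field_simp
  have hu : -Real.log a / n = -t := by rw [ht]; ring
  have h2u : 2 * (-Real.log a / n) - -Real.log a = (n-2)*t := by
    rw [hu, hnt]; ring
  have hn2t : (n-2)*t < 0 := mul_neg_of_pos_of_neg (by linarith) ht0
  have h1 : a ^ ((1:ℝ)/n) = Real.exp t := by
    rw [Real.rpow_def_of_pos ha0]; congr 1; rw [ht]; ring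
  have h2 : a ^ ((2:ℝ)/n) = Real.exp t * Real.exp t := by
    rw [Real.rpow_def_of_pos ha0, ← Real.exp_add]; congr 1; rw [ht]; ring
  have ha : a = Real.exp ((n-2)*t) * Real.exp t * Real.exp t := by
    rw [← Real.exp_add, ← Real.exp_add,
      show (n-2)*t + t + t = n * t by ring, ← hnt, Real.exp_log ha0]
  rw [h2u, hu, pwPhi_of_ne _ (neg_ne_zero.mpr ht0.ne), pwPhi_of_ne _ hn2t.ne]
  unfold pwF
  rw [h1, h2, Real.exp_neg]
  rw [ha]
  set X := Real.exp t with hX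
  set W := Real.exp ((n-2)*t) with hW
  have hXpos : 0 < X := Real.exp_pos t
  have hW1 : W ≠ 1 := by
    rw [hW, Ne, Real.exp_eq_one_iff]
    exact hn2t.ne
  have hden : X * X - W * X * X ≠ 0 := by
    intro h
    apply hW1
    have h2 : X * X * (1 - W) = 0 := by ring_nf; linarith [h]
    rcases mul_eq_zero.mp h2 with h3 | h3
    · exact absurd h3 (by positivity)
    · linarith
  have hWm1 : W - 1 ≠ 0 := sub_ne_zero.mpr hW1
  have htne : t ≠ 0 := ht0.ne
  clear_value t X W
  clear ht hX hW h1 h2 hnt hu h2u ha hloga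
  field_simp
  ring

lemma pwFInf_eq (a : ℝ) (ha0 : 0 < a) (ha1 : a < 1) :
    pwFInf a = pwPhi 0 / pwPhi (2 * (0:ℝ) - -Real.log a) := by
  have hloga : Real.log a < 0 := Real.log_neg ha0 ha1
  have h0 : pwPhi 0 = 1 := if_pos rfl
  rw [h0, show 2 * (0:ℝ) - -Real.log a = Real.log a by ring,
    pwPhi_of_ne _ hloga.ne, Real.exp_log ha0]
  unfold pwFInf
  rw [eq_div_iff]
  · field_simp [sub_ne_zero.mpr ha1.ne, div_self hloga.ne]
    exact div_self hloga.ne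
  · exact div_ne_zero (by intro h; rw [sub_eq_zero] at h; exact ha1.ne h) hloga.ne

lemma pwFTwo_eq (a : ℝ) (ha0 : 0 < a) (ha1 : a < 1) :
    pwFTwo a = pwPhi (-Real.log a / 2) / pwPhi (2 * (-Real.log a / 2) - -Real.log a) := by
  have hloga : Real.log a < 0 := Real.log_neg ha0 ha1
  have h0 : pwPhi (2 * (-Real.log a / 2) - -Real.log a) = 1 := by
    rw [show 2 * (-Real.log a / 2) - -Real.log a = 0 by ring]; exact if_pos rfl
  have hsq : Real.exp (Real.log a / 2) ^ 2 = a := by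
    rw [sq, ← Real.exp_add, add_halves, Real.exp_log ha0]
  have hq : Real.sqrt a = Real.exp (Real.log a / 2) :=
    calc Real.sqrt a = Real.sqrt (Real.exp (Real.log a / 2) ^ 2) := by rw [hsq]
    _ = Real.exp (Real.log a / 2) := Real.sqrt_sq (Real.exp_nonneg _)
  have hexp : Real.exp (-Real.log a / 2) = (Real.exp (Real.log a / 2))⁻¹ := by
    rw [neg_div, Real.exp_neg]
  rw [h0, div_one, pwPhi_of_ne _ (by simp [hloga.ne, div_eq_zero_iff])]
  rw [hexp]
  unfold pwFTwo
  rw [hq, show a = Real.exp (Real.log a / 2) * Real.exp (Real.log a / 2) by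
    rw [← sq, hsq]]
  set q := Real.exp (Real.log a / 2) with hqdef
  set L := Real.log a with hL
  have hqpos : 0 < q := Real.exp_pos _
  have hLne : L ≠ 0 := hloga.ne
  have hgoalL : Real.log (q * q) = L := by rw [← sq, hqdef, hsq]
  rw [hgoalL]
  field_simp
  ring

/-- Weak unidentifiability of the pairwise SIR model: there is `0 < ā < 1` such that
for all `ā < a < 1`: (i) `|f(n) − f(n*)| < f_∞ − f₂` for all `n, n* > 2`; (ii) for
every `n* > 2` and `n > n*`, `|f(n) − f(n*)| < f_∞ − f(n*)`; in particular, with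
`ε = f_∞ − f(n*)`, the set `{n > 2 : |f(n) − f(n*)| < ε}` contains the half-line
`(n*, ∞)` and hence has infinite Lebesgue measure. -/
theorem pairwise_weak_unidentifiability :
    ∃ abar : ℝ, 0 < abar ∧ abar < 1 ∧
      ∀ a : ℝ, abar < a → a < 1 →
        (∀ n nstar : ℝ, 2 < n → 2 < nstar →
          |pwF a n - pwF a nstar| < pwFInf a - pwFTwo a) ∧
        (∀ nstar : ℝ, 2 < nstar → ∀ n : ℝ, nstar < n →
          |pwF a n - pwF a nstar| < pwFInf a - pwF a nstar) ∧
        (∀ nstar : ℝ, 2 < nstar →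
          Set.Ioi nstar ⊆
            {n : ℝ | 2 < n ∧ |pwF a n - pwF a nstar| < pwFInf a - pwF a nstar} ∧
          volume {n : ℝ | 2 < n ∧ |pwF a n - pwF a nstar| < pwFInf a - pwF a nstar}
            = ⊤) := by
  refine ⟨Real.exp (-(1/8)), Real.exp_pos _, Real.exp_lt_one_iff.mpr (by norm_num), ?_⟩
  intro a habar ha1
  have ha0 : 0 < a := lt_trans (Real.exp_pos _) habar
  have hloga : Real.log a < 0 := Real.log_neg ha0 ha1
  set s : ℝ := -Real.log a with hs
  have hs0 : 0 < s := by rw [hs]; linarith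
  have hs8 : s ≤ 1/8 := by
    have h := Real.log_lt_log (Real.exp_pos _) habar
    rw [Real.log_exp] at h
    rw [hs]; linarith
  have hanti := pwG_anti s hs0 hs8
  have hmem : ∀ n : ℝ, 2 < n → s/n ∈ Set.Icc 0 (s/2) := by
    intro n hn
    refine ⟨le_of_lt (div_pos hs0 (by linarith)), ?_⟩
    rw [div_le_div_iff₀ (by linarith) (by norm_num)]
    nlinarith
  have h0mem : (0:ℝ) ∈ Set.Icc 0 (s/2) := ⟨le_refl 0, by linarith⟩
  have h2mem : s/2 ∈ Set.Icc 0 (s/2) := ⟨by positivity, le_refl _⟩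
  have hub : ∀ n, 2 < n → pwF a n < pwFInf a := by
    intro n hn
    rw [pwF_eq a n ha0 ha1 hn, pwFInf_eq a ha0 ha1, ← hs]
    exact hanti h0mem (hmem n hn) (div_pos hs0 (by linarith))
  have hlb : ∀ n, 2 < n → pwFTwo a < pwF a n := by
    intro n hn
    rw [pwF_eq a n ha0 ha1 hn, pwFTwo_eq a ha0 ha1, ← hs]
    exact hanti (hmem n hn) h2mem (div_lt_div_of_pos_left hs0 (by norm_num) hn)
  have hmono : ∀ n m : ℝ, 2 < n → n < m → pwF a n < pwF a m := by
    intro n m hn hm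
    rw [pwF_eq a n ha0 ha1 hn, pwF_eq a m ha0 ha1 (by linarith), ← hs]
    exact hanti (hmem m (by linarith)) (hmem n hn)
      (div_lt_div_of_pos_left hs0 (by linarith) hm)
  have key2 : ∀ nstar : ℝ, 2 < nstar → ∀ n : ℝ, nstar < n →
      |pwF a n - pwF a nstar| < pwFInf a - pwF a nstar := by
    intro nstar hnstar n hn
    have h1 := hmono nstar n hnstar hn
    have h2 := hub n (by linarith)
    rw [abs_of_pos (by linarith)]
    linarith
  refine ⟨?_, key2, ?_⟩
  · intro n nstar hn hnstar
    have b1 := hub n hn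
    have b2 := hlb n hn
    have b3 := hub nstar hnstar
    have b4 := hlb nstar hnstar
    rw [abs_sub_lt_iff]
    constructor <;> linarith
  · intro nstar hnstar
    have hsub : Set.Ioi nstar ⊆
        {n : ℝ | 2 < n ∧ |pwF a n - pwF a nstar| < pwFInf a - pwF a nstar} :=
      fun n hn => ⟨lt_trans hnstar hn, key2 nstar hnstar n hn⟩
    refine ⟨hsub, ?_⟩
    have h := measure_mono (μ := volume) hsub
    rw [Real.volume_Ioi] at h
    exact top_le_iff.mp h
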